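/- Additivity of sandwiched Rényi relative entropy under tensor powers: for quantum states ρ, σ on a finite-dimensional Hilbert space with supp(ρ) ⊆ supp(σ), and for any α ∈ (0,1] and n ≥ 1, D_{1+α}(ρ^{⊗n} ‖ σ^{⊗n}) = n · D_{1+α}(ρ ‖ σ). -/

import Mathlib

/-!
Additivity of the sandwiched Rényi relative entropy under tensor powers:
for quantum states ρ, σ with supp(ρ) ⊆ supp(σ), α ∈ (0,1] and n ≥ 1,
  D_{1+α}(ρ^{⊗n} ‖ σ^{⊗n}) = n · D_{1+α}(ρ ‖ σ),
where D_{1+α}(ρ‖σ) = (1/α) log₂ Tr[(σ^{−α/(2(1+α))} ρ σ^{−α/(2(1+α))})^{1+α}] and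
tensor powers are Kronecker powers.
-/

open Matrix
open scoped ComplexOrder

set_option linter.unusedSectionVars false

variable {n : Type*} [Fintype n] [DecidableEq n]

lemma cfcHerm {A : Matrix n n ℂ} (hA : A.IsHermitian) (f : ℝ → ℝ) :
    (hA.cfc f).IsHermitian := by
  rw [← hA.cfc_eq f]
  exact cfc_predicate f A

/-- Pseudo-power `A^p` of a Hermitian matrix (on its support), via functional calculus. -/
noncomputable def mpow {A : Matrix n n ℂ} (hA : A.IsHermitian) (p : ℝ) : Matrix n n ℂ :=
  hA.cfc (fun t => if t = 0 then 0 else t ^ p)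

lemma sandwichHerm {ρ σ : Matrix n n ℂ} (hρ : ρ.IsHermitian) (hσ : σ.IsHermitian)
    (p : ℝ) : (mpow hσ p * ρ * mpow hσ p).IsHermitian := by
  have h := cfcHerm hσ (fun t => if t = 0 then 0 else t ^ p)
  unfold Matrix.IsHermitian mpow
  simp [conjTranspose_mul, Matrix.mul_assoc, h.eq, hρ.eq]

/-- The sandwiched Rényi relative entropy of order `1 + α` (base-2 logarithm). -/
noncomputable def sandRenyi (α : ℝ) (ρ σ : Matrix n n ℂ)
    (hρ : ρ.IsHermitian) (hσ : σ.IsHermitian) : ℝ :=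
  (1 / α) * Real.logb 2
    (((sandwichHerm hρ hσ (-(α / (2 * (1 + α))))).cfc
        (fun t => if t ≤ 0 then 0 else t ^ (1 + α))).trace.re)

/-- `N`-fold Kronecker (tensor) power of a matrix. -/
def kronPow {m : Type*} [Fintype m] (A : Matrix m m ℂ) (N : ℕ) :
    Matrix (Fin N → m) (Fin N → m) ℂ :=
  Matrix.of fun i j => ∏ k, A (i k) (j k)

lemma kronPowHerm {m : Type*} [Fintype m] {A : Matrix m m ℂ} (hA : A.IsHermitian)
    (N : ℕ) : (kronPow A N).IsHermitian := by
  unfold Matrix.IsHermitian kronPow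
  ext i j
  simp only [conjTranspose_apply, Matrix.of_apply, star_prod]
  exact Finset.prod_congr rfl fun k _ => by rw [← Matrix.conjTranspose_apply, hA.eq]

section auxkron

variable {m : Type*} [Fintype m] [DecidableEq m]

lemma piSum {N : ℕ} (f : Fin N → m → ℂ) :
    ∏ k : Fin N, ∑ y : m, f k y = ∑ x : Fin N → m, ∏ k : Fin N, f k (x k) := by
  rw [Finset.prod_univ_sum]
  rw [Fintype.piFinset_univ]

lemma kronPow_mul (A B : Matrix m m ℂ) (N : ℕ) :
    kronPow A N * kronPow B N = kronPow (A * B) N := by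
  ext i j
  simp only [kronPow, Matrix.mul_apply, Matrix.of_apply]
  rw [piSum (fun k y => A (i k) y * B y (j k))]
  exact Finset.sum_congr rfl fun x _ => (Finset.prod_mul_distrib).symm

lemma kronPow_star (A : Matrix m m ℂ) (N : ℕ) :
    star (kronPow A N) = kronPow (star A) N := by
  ext i j
  simp only [kronPow, star_eq_conjTranspose, conjTranspose_apply, Matrix.of_apply, star_prod]

lemma kronPow_diagonal (d : m → ℂ) (N : ℕ) :
    kronPow (diagonal d) N = diagonal (fun i => ∏ k, d (i k)) := by
  ext i j
  simp only [kronPow, Matrix.of_apply, diagonal_apply]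
  by_cases h : i = j
  · subst h; simp
  · simp only [h, if_false]
    obtain ⟨k, hk⟩ := Function.ne_iff.mp h
    exact Finset.prod_eq_zero (Finset.mem_univ k) (by simp [hk])

lemma kronPow_one (N : ℕ) : kronPow (1 : Matrix m m ℂ) N = 1 := by
  rw [← diagonal_one, kronPow_diagonal]
  simp

lemma kronPow_trace (A : Matrix m m ℂ) (N : ℕ) :
    (kronPow A N).trace = A.trace ^ N := by
  simp only [Matrix.trace, Matrix.diag, kronPow, Matrix.of_apply]
  rw [← piSum (fun _ y => A y y), Finset.prod_const, Finset.card_univ, Fintype.card_fin]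

lemma kronPow_unitary {U : Matrix m m ℂ} (hU : U ∈ Matrix.unitaryGroup m ℂ) (N : ℕ) :
    kronPow U N ∈ Matrix.unitaryGroup (Fin N → m) ℂ := by
  constructor
  · rw [kronPow_star, kronPow_mul, Unitary.star_mul_self_of_mem hU, kronPow_one]
  · rw [kronPow_star, kronPow_mul, Unitary.mul_star_self_of_mem hU, kronPow_one]

end auxkron

section auxcfc

/-- Conjugation by a unitary composed with `diagonal`, as an algebra hom. -/
noncomputable def conjDiagAlgHom (U : Matrix n n ℂ) (hU : U ∈ Matrix.unitaryGroup n ℂ) :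
    (n → ℂ) →ₐ[ℂ] Matrix n n ℂ where
  toFun v := U * diagonal v * star U
  map_one' := by
    show U * diagonal (1 : n → ℂ) * star U = 1
    rw [show diagonal (1 : n → ℂ) = 1 from diagonal_one, mul_one,
      Unitary.mul_star_self_of_mem hU]
  map_mul' v w := by
    show U * diagonal (v * w) * star U = (U * diagonal v * star U) * (U * diagonal w * star U)
    have h1 : star U * U = 1 := Unitary.star_mul_self_of_mem hU
    calc U * diagonal (v * w) * star U
        = U * (diagonal v * (1 : Matrix n n ℂ) * diagonal w) * star U := by
          rw [mul_one, diagonal_mul_diagonal]; rfl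
      _ = U * diagonal v * star U * (U * diagonal w * star U) := by
          rw [← h1]; noncomm_ring
  map_zero' := by
    show U * diagonal (0 : n → ℂ) * star U = 0
    rw [show diagonal (0 : n → ℂ) = 0 from diagonal_zero, mul_zero, zero_mul]
  map_add' v w := by
    show U * diagonal (v + w) * star U
      = U * diagonal v * star U + U * diagonal w * star U
    rw [show (v + w) = fun i => v i + w i from rfl, ← diagonal_add, mul_add, add_mul]
  commutes' c := by
    show U * diagonal (algebraMap ℂ (n → ℂ) c) * star U = algebraMap ℂ (Matrix n n ℂ) c
    have : (algebraMap ℂ (n → ℂ) c) = fun _ : n => c := rfl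
    rw [this, show diagonal (fun _ : n => c) = c • (1 : Matrix n n ℂ) by
      ext i j; by_cases h : i = j <;>
        simp [diagonal_apply, Matrix.one_apply, Matrix.smul_apply, h]]
    rw [mul_smul_comm, smul_mul_assoc, mul_one, Unitary.mul_star_self_of_mem hU]
    rw [Algebra.algebraMap_eq_smul_one]

lemma aeval_conj_diag (U : Matrix n n ℂ) (hU : U ∈ Matrix.unitaryGroup n ℂ)
    (d : n → ℝ) (p : Polynomial ℝ) :
    Polynomial.aeval (U * diagonal (fun i => (d i : ℂ)) * star U) p
      = U * diagonal (fun i => ((p.eval (d i) : ℝ) : ℂ)) * star U := by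
  have h := Polynomial.aeval_algHom_apply ((conjDiagAlgHom U hU).restrictScalars ℝ)
    (fun i => (d i : ℂ)) p
  simp only [AlgHom.coe_restrictScalars'] at h
  have h2 : (Polynomial.aeval (fun i => (d i : ℂ)) p : n → ℂ)
      = fun i => (((p.eval (d i) : ℝ)) : ℂ) := by
    funext i
    have h3 := Polynomial.aeval_algHom_apply
      ((Pi.evalAlgHom ℂ (fun _ : n => ℂ) i).restrictScalars ℝ) (fun i => (d i : ℂ)) p
    simp only [AlgHom.coe_restrictScalars', Pi.evalAlgHom_apply] at h3
    rw [← h3, ← Complex.coe_algebraMap,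
      Polynomial.aeval_algebraMap_apply_eq_algebraMap_eval]
  rw [show ((conjDiagAlgHom U hU) fun i => ((d i : ℂ)))
      = U * diagonal (fun i => ((d i : ℂ))) * star U from rfl] at h
  rw [h, h2]
  rfl

end auxcfc

section auxcfc2

lemma coeRC : ((RCLike.ofReal : ℝ → ℂ)) = Complex.ofReal := rfl

lemma cfc_poly {B : Matrix n n ℂ} (hB : B.IsHermitian) (p : Polynomial ℝ) :
    hB.cfc (fun t => p.eval t) = Polynomial.aeval B p := by
  have hU : (hB.eigenvectorUnitary : Matrix n n ℂ) ∈ Matrix.unitaryGroup n ℂ :=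
    SetLike.coe_mem _
  rw [Matrix.IsHermitian.cfc]
  conv_rhs => rw [hB.spectral_theorem]
  simp only [Function.comp_def, coeRC, Unitary.conjStarAlgAut_apply, Unitary.coe_star]
  rw [aeval_conj_diag _ hU hB.eigenvalues p]

lemma cfc_conj_diag {B : Matrix n n ℂ} (hB : B.IsHermitian) (U : Matrix n n ℂ)
    (hU : U ∈ Matrix.unitaryGroup n ℂ) (d : n → ℝ)
    (hBeq : B = U * diagonal (fun i => (d i : ℂ)) * star U) (f : ℝ → ℝ) :
    hB.cfc f = U * diagonal (fun i => ((f (d i) : ℝ) : ℂ)) * star U := by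
  classical
  set S : Finset ℝ := Finset.image d Finset.univ ∪ Finset.image hB.eigenvalues Finset.univ
    with hS
  set p : Polynomial ℝ := Lagrange.interpolate S id f with hp
  have hinj : Set.InjOn id (S : Set ℝ) := Set.injOn_id _
  have hnode : ∀ x ∈ S, p.eval x = f x := fun x hx =>
    Lagrange.eval_interpolate_at_node f hinj hx
  have h1 : hB.cfc f = hB.cfc (fun t => p.eval t) := by
    rw [Matrix.IsHermitian.cfc, Matrix.IsHermitian.cfc]
    have he : RCLike.ofReal (K := ℂ) ∘ f ∘ hB.eigenvalues
        = RCLike.ofReal (K := ℂ) ∘ (fun t => p.eval t) ∘ hB.eigenvalues :=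
      funext fun i => by
        simp only [Function.comp_apply]
        rw [hnode (hB.eigenvalues i)
          (Finset.mem_union_right _ (Finset.mem_image_of_mem _ (Finset.mem_univ i)))]
    rw [he]
  have h2 : (fun i : n => ((p.eval (d i) : ℝ) : ℂ)) = fun i => ((f (d i) : ℝ) : ℂ) :=
    funext fun i => by
      rw [hnode (d i)
        (Finset.mem_union_left _ (Finset.mem_image_of_mem _ (Finset.mem_univ i)))]
  rw [h1, cfc_poly, hBeq, aeval_conj_diag U hU d p, h2]

end auxcfc2

section auxmain

variable {m : Type*} [Fintype m] [DecidableEq m]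

lemma f_prod {f : ℝ → ℝ} (hf1 : f 1 = 1)
    (hfm : ∀ x y : ℝ, 0 ≤ x → 0 ≤ y → f (x * y) = f x * f y)
    {ι : Type*} (s : Finset ι) (x : ι → ℝ) (hx : ∀ k, 0 ≤ x k) :
    f (∏ k ∈ s, x k) = ∏ k ∈ s, f (x k) := by
  classical
  induction s using Finset.induction_on with
  | empty => simpa using hf1
  | insert _ _ hnot ih =>
    rename_i a s
    rw [Finset.prod_insert hnot, Finset.prod_insert hnot,
      hfm _ _ (hx a) (Finset.prod_nonneg fun k _ => hx k), ih]

lemma cfc_kronPow {A : Matrix m m ℂ} (hA : A.PosSemidef) {f : ℝ → ℝ}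
    (hf1 : f 1 = 1) (hfm : ∀ x y : ℝ, 0 ≤ x → 0 ≤ y → f (x * y) = f x * f y)
    (N : ℕ) (hK : (kronPow A N).IsHermitian) :
    hK.cfc f = kronPow (hA.1.cfc f) N := by
  set V := (hA.1.eigenvectorUnitary : Matrix m m ℂ) with hVdef
  have hV : V ∈ Matrix.unitaryGroup m ℂ := SetLike.coe_mem _
  have hKV := kronPow_unitary hV N
  set e := hA.1.eigenvalues with hedef
  have hkron : ∀ C D E : Matrix m m ℂ,
      kronPow (C * D * E) N = kronPow C N * kronPow D N * kronPow E N := by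
    intro C D E
    rw [kronPow_mul, kronPow_mul]
  have hdiag : kronPow (diagonal (RCLike.ofReal ∘ e) : Matrix m m ℂ) N
      = diagonal (fun i : Fin N → m => ((∏ k, e (i k) : ℝ) : ℂ)) := by
    rw [kronPow_diagonal]
    exact congrArg _ (funext fun i => by simp [Function.comp_apply])
  have hdec : kronPow A N = kronPow V N
      * diagonal (fun i : Fin N → m => ((∏ k, e (i k) : ℝ) : ℂ))
      * star (kronPow V N) := by
    conv_lhs => rw [hA.1.spectral_theorem]
    simp only [Unitary.conjStarAlgAut_apply, Unitary.coe_star]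
    rw [hkron, hdiag, kronPow_star]
  rw [cfc_conj_diag hK (kronPow V N) hKV (fun i => ∏ k, e (i k)) hdec f]
  rw [Matrix.IsHermitian.cfc]
  simp only [Unitary.conjStarAlgAut_apply, Unitary.coe_star]
  rw [hkron, ← kronPow_star, kronPow_diagonal]
  have hfun : (fun i : Fin N → m => (((f (∏ k, e (i k))) : ℝ) : ℂ))
      = fun i : Fin N → m => ∏ k, (RCLike.ofReal (K := ℂ) ∘ f ∘ e) (i k) := by
    funext i
    simp only [Function.comp_apply, coeRC]
    rw [f_prod hf1 hfm Finset.univ (fun k => e (i k)) (fun k => hA.eigenvalues_nonneg (i k))]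
    push_cast
    rfl
  rw [hfun]

end auxmain

lemma cfc_mcongr {A B : Matrix n n ℂ} (hA : A.IsHermitian) (hB : B.IsHermitian)
    (h : A = B) (f : ℝ → ℝ) : hA.cfc f = hB.cfc f := by subst h; rfl

set_option maxHeartbeats 1600000 in
theorem sandwiched_renyi_tensor_power_additive
    (ρ σ : Matrix n n ℂ) (hρ : ρ.PosSemidef) (hρtr : ρ.trace = 1)
    (hσ : σ.PosSemidef) (hσtr : σ.trace = 1)
    (hsupp : ∀ x : n → ℂ, σ *ᵥ x = 0 → ρ *ᵥ x = 0)
    (α : ℝ) (hα0 : 0 < α) (hα1 : α ≤ 1) (N : ℕ) (hN : 1 ≤ N) :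
    sandRenyi α (kronPow ρ N) (kronPow σ N) (kronPowHerm hρ.1 N) (kronPowHerm hσ.1 N)
      = N * sandRenyi α ρ σ hρ.1 hσ.1 := by
  classical
  set p : ℝ := -(α / (2 * (1 + α))) with hpdef
  set fp : ℝ → ℝ := fun t => if t = 0 then 0 else t ^ p with hfp
  set g : ℝ → ℝ := fun t => if t ≤ 0 then 0 else t ^ (1 + α) with hgdef
  have hfp1 : fp 1 = 1 := by simp [hfp, Real.one_rpow]
  have hfpm : ∀ x y : ℝ, 0 ≤ x → 0 ≤ y → fp (x * y) = fp x * fp y := by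
    intro x y hx hy
    rcases eq_or_lt_of_le hx with h | h
    · simp [hfp, ← h]
    rcases eq_or_lt_of_le hy with h' | h'
    · simp [hfp, ← h']
    have hxy : x * y ≠ 0 := by positivity
    simp only [hfp, if_neg hxy, if_neg (ne_of_gt h), if_neg (ne_of_gt h'),
      Real.mul_rpow hx hy]
  have hg1 : g 1 = 1 := by norm_num [hgdef]
  have hgm : ∀ x y : ℝ, 0 ≤ x → 0 ≤ y → g (x * y) = g x * g y := by
    intro x y hx hy
    rcases eq_or_lt_of_le hx with h | h
    · simp [hgdef, ← h]
    rcases eq_or_lt_of_le hy with h' | h'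
    · simp [hgdef, ← h']
    have hxy : 0 < x * y := by positivity
    simp only [hgdef, if_neg (not_le.mpr hxy), if_neg (not_le.mpr h),
      if_neg (not_le.mpr h'), Real.mul_rpow hx hy]
  set mσ : Matrix n n ℂ := mpow hσ.1 p with hmσ
  have hmσH : (mσ)ᴴ = mσ := cfcHerm hσ.1 fp
  have hS : (mσ * ρ * mσ).PosSemidef := by
    have h := hρ.mul_mul_conjTranspose_same mσ
    rwa [hmσH] at h
  have hmpk : mpow (kronPowHerm hσ.1 N) p = kronPow mσ N :=
    cfc_kronPow hσ hfp1 hfpm N (kronPowHerm hσ.1 N)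
  have hbig : mpow (kronPowHerm hσ.1 N) p * kronPow ρ N * mpow (kronPowHerm hσ.1 N) p
      = kronPow (mσ * ρ * mσ) N := by
    rw [hmpk, kronPow_mul, kronPow_mul]
  have hKS : (kronPow (mσ * ρ * mσ) N).IsHermitian := kronPowHerm hS.1 N
  have h6 : (sandwichHerm (kronPowHerm hρ.1 N) (kronPowHerm hσ.1 N) p).cfc g
      = kronPow ((sandwichHerm hρ.1 hσ.1 p).cfc g) N := by
    rw [cfc_mcongr _ hKS hbig g, cfc_kronPow hS hg1 hgm N hKS]
  set T : Matrix n n ℂ := (sandwichHerm hρ.1 hσ.1 p).cfc g with hTdef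
  have htr : ((sandwichHerm (kronPowHerm hρ.1 N) (kronPowHerm hσ.1 N) p).cfc g).trace
      = T.trace ^ N := by rw [h6, kronPow_trace]
  have hTH : Tᴴ = T := cfcHerm (sandwichHerm hρ.1 hσ.1 p) g
  have hre : (T.trace.re : ℂ) = T.trace := by
    have h1 : Tᴴ.trace = T.trace := by rw [hTH]
    rw [Matrix.trace_conjTranspose] at h1
    exact Complex.conj_eq_iff_re.mp h1
  have hre2 : (T.trace ^ N).re = T.trace.re ^ N := by
    conv_lhs => rw [← hre]
    rw [← Complex.ofReal_pow, Complex.ofReal_re]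
  have final : (1 / α) * Real.logb 2
      (((sandwichHerm (kronPowHerm hρ.1 N) (kronPowHerm hσ.1 N) p).cfc g).trace.re)
      = (N : ℝ) * ((1 / α) * Real.logb 2 (T.trace.re)) := by
    rw [htr, hre2, Real.logb_pow]
    ring
  exact final
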